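/- If v is a convex direction that gives complete data piling, then there exist s ≠ 0 and b ∈ ℝ such that the pair (s • v, b) is feasible for the hard margin SVM problem (y i * (⟪s • v, x i⟫ + b) ≥ 1 for all i) and is a hard margin solution, i.e., it minimizes ½‖w‖² over all feasible pairs (w, b). -/

import Mathlib

open scoped RealInnerProductSpace BigOperators

variable {E : Type*} [NormedAddCommGroup E] [InnerProductSpace ℝ E]

/-- A vector `v` gives complete data piling for the labeled data `(x, y)`. -/
def Piling {n : ℕ} (x : Fin n → E) (y : Fin n → ℝ) (v : E) : Prop :=
  ∃ a b : ℝ, a ≠ 0 ∧ ∀ i, ⟪v, x i⟫ = a * y i + b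

/-- A vector `v` is a convex direction. -/
def ConvexDir {n : ℕ} (x : Fin n → E) (y : Fin n → ℝ) (v : E) : Prop :=
  ∃ t : ℝ, t ≠ 0 ∧ ∃ cp ∈ convexHull ℝ (x '' {i | y i = 1}),
    ∃ cm ∈ convexHull ℝ (x '' {i | y i = -1}), v = t • (cp - cm)

/-- `(w, b)` is feasible for the hard margin SVM problem. -/
def HardFeasible {n : ℕ} (x : Fin n → E) (y : Fin n → ℝ) (w : E) (b : ℝ) : Prop :=
  ∀ i, 1 ≤ y i * (⟪w, x i⟫ + b)

/-- `(w, b)` is a hard margin SVM solution: feasible and minimizes `½‖w‖²` over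
all feasible pairs. -/
def HardSolution {n : ℕ} (x : Fin n → E) (y : Fin n → ℝ) (w : E) (b : ℝ) : Prop :=
  HardFeasible x y w b ∧
    ∀ w' : E, ∀ b' : ℝ, HardFeasible x y w' b' → (1 / 2) * ‖w‖ ^ 2 ≤ (1 / 2) * ‖w'‖ ^ 2

private lemma inner_isLinear (w : E) : IsLinearMap ℝ (fun z : E => ⟪w, z⟫) :=
  ⟨fun a b => inner_add_right w a b, fun c a => real_inner_smul_right w a c⟩

private lemma inner_hull_eq {w : E} {S : Set E} {r : ℝ} (h : ∀ z ∈ S, ⟪w, z⟫ = r)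
    {c : E} (hc : c ∈ convexHull ℝ S) : ⟪w, c⟫ = r :=
  convexHull_min h (convex_hyperplane (inner_isLinear w) r) hc

private lemma inner_hull_ge {w : E} {S : Set E} {r : ℝ} (h : ∀ z ∈ S, r ≤ ⟪w, z⟫)
    {c : E} (hc : c ∈ convexHull ℝ S) : r ≤ ⟪w, c⟫ :=
  convexHull_min h (convex_halfSpace_ge (inner_isLinear w) r) hc

private lemma inner_hull_le {w : E} {S : Set E} {r : ℝ} (h : ∀ z ∈ S, ⟪w, z⟫ ≤ r)
    {c : E} (hc : c ∈ convexHull ℝ S) : ⟪w, c⟫ ≤ r :=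
  convexHull_min h (convex_halfSpace_le (inner_isLinear w) r) hc

theorem convex_piling_is_hard_margin_solution {n : ℕ} (x : Fin n → E) (y : Fin n → ℝ)
    (hy : ∀ i, y i = 1 ∨ y i = -1)
    (hpos : ∃ i, y i = 1) (hneg : ∃ i, y i = -1)
    (v : E) (hv : ConvexDir x y v) (hv_pile : Piling x y v) :
    ∃ s : ℝ, s ≠ 0 ∧ ∃ b : ℝ, HardSolution x y (s • v) b := by
  obtain ⟨t, ht, cp, hcp, cm, hcm, hveq⟩ := hv
  obtain ⟨a, b, ha, hab⟩ := hv_pile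
  -- inner products with the hull points
  have hvp : ⟪v, cp⟫ = a + b := by
    refine inner_hull_eq ?_ hcp
    rintro z ⟨i, hi, rfl⟩
    rw [hab i, Set.mem_setOf_eq.mp hi, mul_one]
  have hvm : ⟪v, cm⟫ = -a + b := by
    refine inner_hull_eq ?_ hcm
    rintro z ⟨i, hi, rfl⟩
    rw [hab i, Set.mem_setOf_eq.mp hi]; ring
  have hnv : ‖v‖ ^ 2 = 2 * t * a := by
    have : ⟪v, v⟫ = t * (⟪v, cp⟫ - ⟪v, cm⟫) := by
      nth_rewrite 2 [hveq]
      rw [real_inner_smul_right, inner_sub_right]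
    rw [← real_inner_self_eq_norm_sq, this, hvp, hvm]; ring
  have hv0 : v ≠ 0 := by
    intro h
    apply ha
    have h1 : (0 : ℝ) = a + b := by rw [← hvp, h, inner_zero_left]
    have h2 : (0 : ℝ) = -a + b := by rw [← hvm, h, inner_zero_left]
    linarith
  have hnvpos : 0 < ‖v‖ ^ 2 := pow_pos (norm_pos_iff.mpr hv0) 2
  have hta : 0 < t * a := by nlinarith
  refine ⟨1 / a, by simpa using ha, -b / a, ?_, ?_⟩
  · -- feasibility
    intro i
    have : ⟪(1 / a) • v, x i⟫ + -b / a = y i := by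
      rw [real_inner_smul_left, hab i]
      field_simp
      ring
    rw [this]
    rcases hy i with h | h <;> rw [h] <;> norm_num
  · -- optimality
    intro w' b' hfeas
    have hp : 1 ≤ ⟪w', cp⟫ + b' := by
      have := inner_hull_ge (w := w') (r := 1 - b') ?_ hcp
      · linarith
      · rintro z ⟨i, hi, rfl⟩
        have := hfeas i
        rw [Set.mem_setOf_eq.mp hi, one_mul] at this
        linarith
    have hm : ⟪w', cm⟫ + b' ≤ -1 := by
      have := inner_hull_le (w := w') (r := -1 - b') ?_ hcm
      · linarith
      · rintro z ⟨i, hi, rfl⟩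
        have := hfeas i
        rw [Set.mem_setOf_eq.mp hi, neg_one_mul] at this
        linarith
    have hdiff : (2 : ℝ) ≤ ⟪w', cp - cm⟫ := by
      rw [inner_sub_right]; linarith
    have hCS : ⟪w', cp - cm⟫ ≤ ‖w'‖ * ‖cp - cm‖ := real_inner_le_norm w' (cp - cm)
    have hnormv : ‖v‖ = |t| * ‖cp - cm‖ := by
      rw [hveq, norm_smul, Real.norm_eq_abs]
    have hcpm : ‖cp - cm‖ ≠ 0 := by
      intro h
      rw [h, mul_zero, norm_eq_zero] at hnormv
      exact hv0 hnormv
    have hcpmpos : 0 < ‖cp - cm‖ := lt_of_le_of_ne (norm_nonneg _) (Ne.symm hcpm)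
    have hw' : 2 ≤ ‖w'‖ * ‖cp - cm‖ := le_trans hdiff hCS
    -- ‖(1/a) • v‖ ≤ ‖w'‖
    have hsv : ‖(1 / a) • v‖ = ‖v‖ / |a| := by
      rw [norm_smul, Real.norm_eq_abs, abs_div, abs_one, div_mul_eq_mul_div, one_mul]
    have hta' : |t| * |a| = t * a := by
      rw [← abs_mul]; exact abs_of_pos hta
    have key : ‖v‖ / |a| ≤ ‖w'‖ := by
      rw [div_le_iff₀ (abs_pos.mpr ha)]
      -- ‖v‖ ≤ ‖w'‖ * |a|; we know ‖v‖^2 = 2 t a = 2 |t||a|, ‖v‖ = |t| ‖cp-cm‖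
      -- so |t| ‖cp-cm‖ * ‖cp-cm‖ |t| = 2 |t| |a| → ‖cp-cm‖^2 |t| = 2|a|
      -- and ‖w'‖ ≥ 2 / ‖cp-cm‖
      have habs : 0 < |t| := abs_pos.mpr ht
      have h1 : |t| * ‖cp - cm‖ ^ 2 = 2 * |a| := by
        have : (|t| * ‖cp - cm‖) ^ 2 = 2 * t * a := by rw [← hnormv]; exact hnv
        nlinarith
      nlinarith [norm_nonneg w', abs_nonneg a]
    calc (1 / 2) * ‖(1 / a) • v‖ ^ 2 = (1 / 2) * (‖v‖ / |a|) ^ 2 := by rw [hsv]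
      _ ≤ (1 / 2) * ‖w'‖ ^ 2 := by
          have h0 : 0 ≤ ‖v‖ / |a| := by positivity
          nlinarith
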